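/- For every λ ∈ (0,1), all ε, r > 0, every real a > 0 and every real b > 1, there exist t₀ > 0 and smooth functions β, γ : [0, t₀] → (0, ∞) satisfying the differential inequalities −a·γ''(t)/γ(t) − b·β''(t)/β(t) > 0 and −β''(t)/β(t) + (b−1)·(1 − β'(t)²)/β(t)² − a·γ'(t)·β'(t)/(γ(t)·β(t)) > 0 for all t ∈ [0, t₀], together with the boundary conditions γ(0) = 1, β(0) = r, γ'(0) ≤ ε, β'(0) = 0, γ'(t₀) ≥ 0 and β'(t₀) ≥ λ. -/

import Mathlib

open Real Set Filter

noncomputable def WFh (τ : ℝ) : ℝ → ℝ :=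
  fun t => τ + Real.smoothTransition ((4*t+2*τ)/τ) * t

lemma WFh_pos {τ : ℝ} (hτ : 0 < τ) (t : ℝ) : 0 < WFh τ t := by
  unfold WFh
  rcases le_or_gt t (-(τ/2)) with h'|h'
  · rw [Real.smoothTransition.zero_of_nonpos
      (div_nonpos_of_nonpos_of_nonneg (by linarith) hτ.le)]
    simpa using hτ
  · rcases le_or_gt t 0 with h''|h''
    · have hle := Real.smoothTransition.le_one ((4*t+2*τ)/τ)
      have hge := Real.smoothTransition.nonneg ((4*t+2*τ)/τ)
      nlinarith [mul_nonneg (sub_nonneg.2 hle) (neg_nonneg.2 h'')]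
    · nlinarith [Real.smoothTransition.nonneg ((4*t+2*τ)/τ)]

lemma WFh_ne {τ : ℝ} (hτ : 0 < τ) (t : ℝ) : WFh τ t ≠ 0 := (WFh_pos hτ t).ne'

lemma WFh_eq {τ : ℝ} (hτ : 0 < τ) {t : ℝ} (ht : -(τ/4) < t) : WFh τ t = τ + t := by
  unfold WFh
  rw [Real.smoothTransition.one_of_one_le (by rw [le_div_iff₀ hτ]; linarith), one_mul]

lemma WFh_smooth {τ : ℝ} : ContDiff ℝ (⊤ : ℕ∞) (WFh τ) :=
  contDiff_const.add ((Real.smoothTransition.contDiff.comp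
    (((contDiff_const.mul contDiff_id).add contDiff_const).div_const _)).mul contDiff_id)

/-- the exp-power building block -/
noncomputable def WFe (τ q : ℝ) : ℝ → ℝ :=
  fun t => Real.exp (q * (Real.log (WFh τ t) - Real.log τ))

lemma WFe_smooth {τ q : ℝ} (hτ : 0 < τ) : ContDiff ℝ (⊤ : ℕ∞) (WFe τ q) :=
  (contDiff_const.mul ((WFh_smooth.log (WFh_ne hτ)).sub contDiff_const)).exp

lemma WFe_pos {τ q : ℝ} (t : ℝ) : 0 < WFe τ q t := Real.exp_pos _

lemma WFe_zero {τ q : ℝ} (hτ : 0 < τ) : WFe τ q 0 = 1 := by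
  unfold WFe
  rw [WFh_eq hτ (by linarith), add_zero, sub_self, mul_zero, Real.exp_zero]

/-- local formula near the working region -/
lemma WFe_eventuallyEq {τ q : ℝ} (hτ : 0 < τ) {t : ℝ} (ht : -(τ/4) < t) :
    WFe τ q =ᶠ[nhds t] fun u => Real.exp (q * (Real.log (τ+u) - Real.log τ)) := by
  filter_upwards [Ioi_mem_nhds ht] with u hu
  unfold WFe
  rw [WFh_eq hτ hu]

lemma WFe_hasDeriv {τ q : ℝ} (hτ : 0 < τ) {t : ℝ} (ht : -(τ/4) < t) :
    HasDerivAt (WFe τ q) (q/(τ+t) * WFe τ q t) t := by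
  have hx : (0:ℝ) < τ + t := by linarith
  have h1 : HasDerivAt (fun u => Real.log (τ+u) - Real.log τ) (1/(τ+t)) t := by
    simpa using (((hasDerivAt_id t).const_add τ).log hx.ne').sub_const (Real.log τ)
  have h2 : HasDerivAt (fun u => Real.exp (q * (Real.log (τ+u) - Real.log τ)))
      (Real.exp (q * (Real.log (τ+t) - Real.log τ)) * (q * (1/(τ+t)))) t := (h1.const_mul q).exp
  have h3 := h2.congr_of_eventuallyEq (WFe_eventuallyEq hτ ht)
  have h4 : WFe τ q t = Real.exp (q * (Real.log (τ+t) - Real.log τ)) := by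
    unfold WFe; rw [WFh_eq hτ ht]
  rw [h4]
  exact h3.congr_deriv (by ring)

lemma WFe_deriv {τ q : ℝ} (hτ : 0 < τ) {t : ℝ} (ht : -(τ/4) < t) :
    deriv (WFe τ q) t = q/(τ+t) * WFe τ q t := (WFe_hasDeriv hτ ht).deriv

noncomputable def WFd (τ q : ℝ) : ℝ → ℝ := fun t => q/(τ+t) * WFe τ q t

lemma WFd_hasDeriv {τ q : ℝ} (hτ : 0 < τ) {t : ℝ} (ht : -(τ/4) < t) :
    HasDerivAt (WFd τ q) (q*(q-1)/(τ+t)^2 * WFe τ q t) t := by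
  have hx : (0:ℝ) < τ + t := by linarith
  have h1 : HasDerivAt (fun u : ℝ => τ + u) 1 t := (hasDerivAt_id t).const_add τ
  have h2 : HasDerivAt (fun u : ℝ => q * (τ+u)⁻¹) (q * (-1 / (τ+t)^2)) t := by
    have := h1.inv hx.ne'
    simpa using this.const_mul q
  have h3 := h2.mul (WFe_hasDeriv (q := q) hτ ht)
  have : HasDerivAt (WFd τ q)
      (q * (-1 / (τ+t)^2) * WFe τ q t + q * (τ+t)⁻¹ * (q/(τ+t) * WFe τ q t)) t := by
    apply h3.congr_of_eventuallyEq
    filter_upwards with u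
    unfold WFd
    rw [div_eq_mul_inv]
    rfl
  convert this using 1
  field_simp
  ring

lemma WFe_deriv2 {τ q : ℝ} (hτ : 0 < τ) {t : ℝ} (ht : -(τ/4) < t) :
    deriv (deriv (WFe τ q)) t = q*(q-1)/(τ+t)^2 * WFe τ q t := by
  have hev : deriv (WFe τ q) =ᶠ[nhds t] WFd τ q := by
    filter_upwards [Ioi_mem_nhds ht] with u hu
    exact WFe_deriv hτ hu
  rw [hev.deriv_eq]
  exact (WFd_hasDeriv hτ ht).deriv

noncomputable def WFβ (τ r c₁ c₂ p : ℝ) : ℝ → ℝ :=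
  fun t => r * (c₁ * WFe τ p t + c₂ * WFe τ (1-p) t)

noncomputable def WFB (τ r c₁ c₂ p : ℝ) : ℝ → ℝ :=
  fun t => r/(τ+t) * (c₁ * p * WFe τ p t + c₂ * (1-p) * WFe τ (1-p) t)

lemma WFβ_hasDeriv {τ r c₁ c₂ p : ℝ} (hτ : 0 < τ) {t : ℝ} (ht : -(τ/4) < t) :
    HasDerivAt (WFβ τ r c₁ c₂ p) (WFB τ r c₁ c₂ p t) t := by
  have hx : (0:ℝ) < τ + t := by linarith
  have h1 := ((WFe_hasDeriv (q := p) hτ ht).const_mul c₁).add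
    ((WFe_hasDeriv (q := 1-p) hτ ht).const_mul c₂)
  have h2 := h1.const_mul r
  exact h2.congr_deriv (by unfold WFB; ring)

lemma WFB_hasDeriv {τ r c₁ c₂ p : ℝ} (hτ : 0 < τ) {t : ℝ} (ht : -(τ/4) < t) :
    HasDerivAt (WFB τ r c₁ c₂ p) (p*(p-1)/(τ+t)^2 * WFβ τ r c₁ c₂ p t) t := by
  have hx : (0:ℝ) < τ + t := by linarith
  have h1 : HasDerivAt (fun u : ℝ => r * (τ+u)⁻¹) (r * (-1 / (τ+t)^2)) t := by
    simpa using (((hasDerivAt_id t).const_add τ).inv hx.ne').const_mul r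
  have h2 := ((WFe_hasDeriv (q := p) hτ ht).const_mul (c₁*p)).add
    ((WFe_hasDeriv (q := 1-p) hτ ht).const_mul (c₂*(1-p)))
  have h3 := h1.mul h2
  have h4 : HasDerivAt (WFB τ r c₁ c₂ p)
      (r * (-1 / (τ+t)^2) * (c₁ * p * WFe τ p t + c₂ * (1-p) * WFe τ (1-p) t)
        + r * (τ+t)⁻¹ * (c₁ * p * (p/(τ+t) * WFe τ p t)
          + c₂ * (1-p) * ((1-p)/(τ+t) * WFe τ (1-p) t))) t := by
    apply h3.congr_of_eventuallyEq
    filter_upwards with u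
    unfold WFB
    rw [div_eq_mul_inv]
    rfl
  convert h4 using 1
  unfold WFβ
  field_simp
  ring

lemma WFβ_deriv {τ r c₁ c₂ p : ℝ} (hτ : 0 < τ) {t : ℝ} (ht : -(τ/4) < t) :
    deriv (WFβ τ r c₁ c₂ p) t = WFB τ r c₁ c₂ p t := (WFβ_hasDeriv hτ ht).deriv

lemma WFβ_deriv2 {τ r c₁ c₂ p : ℝ} (hτ : 0 < τ) {t : ℝ} (ht : -(τ/4) < t) :
    deriv (deriv (WFβ τ r c₁ c₂ p)) t = p*(p-1)/(τ+t)^2 * WFβ τ r c₁ c₂ p t := by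
  have hev : deriv (WFβ τ r c₁ c₂ p) =ᶠ[nhds t] WFB τ r c₁ c₂ p := by
    filter_upwards [Ioi_mem_nhds ht] with u hu
    exact WFβ_deriv hτ hu
  rw [hev.deriv_eq]
  exact (WFB_hasDeriv hτ ht).deriv

set_option maxHeartbeats 2000000 in
/-- existence of warping functions β, γ on [0, t₀] satisfying the
weighted Ricci positivity differential inequalities and the boundary conditions. -/
theorem warping_functions_exist (lam ε r a b : ℝ) (hlam : lam ∈ Set.Ioo (0:ℝ) 1)
    (hε : 0 < ε) (hr : 0 < r) (ha : 0 < a) (hb : 1 < b) :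
    ∃ t₀ : ℝ, 0 < t₀ ∧ ∃ β γ : ℝ → ℝ,
      ContDiff ℝ (⊤ : ℕ∞) β ∧ ContDiff ℝ (⊤ : ℕ∞) γ ∧
      (∀ t ∈ Set.Icc 0 t₀, 0 < β t) ∧ (∀ t ∈ Set.Icc 0 t₀, 0 < γ t) ∧
      (∀ t ∈ Set.Icc 0 t₀,
        0 < -a * deriv (deriv γ) t / γ t - b * deriv (deriv β) t / β t) ∧
      (∀ t ∈ Set.Icc 0 t₀,
        0 < -(deriv (deriv β) t) / β t + (b - 1) * (1 - (deriv β t) ^ 2) / (β t) ^ 2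
            - a * (deriv γ t * deriv β t) / (γ t * β t)) ∧
      γ 0 = 1 ∧ β 0 = r ∧ deriv γ 0 ≤ ε ∧ deriv β 0 = 0 ∧
      0 ≤ deriv γ t₀ ∧ lam ≤ deriv β t₀ := by
  obtain ⟨hl0, hl1⟩ := hlam
  have hl2 : 0 < 1 - lam^2 := by nlinarith
  have hk : 0 < b - 1 := by linarith
  -- choose the exponent μ for γ
  obtain ⟨μ, hμpos, hμ1, hA1⟩ :
      ∃ μ : ℝ, 0 < μ ∧ 0 < 1 - μ ∧ a*μ*lam^2 ≤ (b-1)*(1-lam^2)/2 := by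
    refine ⟨min (1/2) ((b-1)*(1-lam^2)/(2*a*lam^2)), lt_min (by norm_num) (by positivity),
      by have := min_le_left (1/2 : ℝ) ((b-1)*(1-lam^2)/(2*a*lam^2)); linarith, ?_⟩
    have h1 : min (1/2 : ℝ) ((b-1)*(1-lam^2)/(2*a*lam^2)) ≤ (b-1)*(1-lam^2)/(2*a*lam^2) :=
      min_le_right _ _
    have h2 : a*lam^2*(min (1/2 : ℝ) ((b-1)*(1-lam^2)/(2*a*lam^2)))
        ≤ a*lam^2*((b-1)*(1-lam^2)/(2*a*lam^2)) :=
      mul_le_mul_of_nonneg_left h1 (by positivity)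
    have h3 : a*lam^2*((b-1)*(1-lam^2)/(2*a*lam^2)) = (b-1)*(1-lam^2)/2 := by
      field_simp
    nlinarith [h2, h3]
  -- choose the exponent p for β
  obtain ⟨p, hp1, hbQ⟩ :
      ∃ p : ℝ, 1 < p ∧ b*(p*(p-1)) = a*μ*(1-μ)/2 := by
    have hQpos : 0 < a*μ*(1-μ)/(2*b) := by
      apply div_pos (mul_pos (mul_pos ha hμpos) hμ1)
      linarith
    have hs2 : (Real.sqrt (1+4*(a*μ*(1-μ)/(2*b))))^2 = 1+4*(a*μ*(1-μ)/(2*b)) :=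
      Real.sq_sqrt (by linarith)
    have hs0 : 0 ≤ Real.sqrt (1+4*(a*μ*(1-μ)/(2*b))) := Real.sqrt_nonneg _
    have hs1 : 1 < Real.sqrt (1+4*(a*μ*(1-μ)/(2*b))) := by nlinarith
    refine ⟨(1 + Real.sqrt (1+4*(a*μ*(1-μ)/(2*b))))/2, by linarith, ?_⟩
    have hb0 : b ≠ 0 := by linarith
    have hpq : (1 + Real.sqrt (1+4*(a*μ*(1-μ)/(2*b))))/2
        * ((1 + Real.sqrt (1+4*(a*μ*(1-μ)/(2*b))))/2 - 1) = a*μ*(1-μ)/(2*b) := by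
      linear_combination hs2/4
    rw [hpq]
    field_simp
  have hppos : 0 < p*(p-1) := by nlinarith
  have hA2 : p*(p-1)*lam^2 ≤ (b-1)*(1-lam^2)/4 := by
    have h1 : p*(p-1) ≤ a*μ/2 := by nlinarith [hbQ, hppos, mul_pos ha hμpos]
    nlinarith [hA1, h1, mul_pos ha hμpos, sq_nonneg lam, hl2]
  -- choose the time scale τ
  obtain ⟨τ, hτpos, hτr, hτε⟩ : ∃ τ : ℝ, 0 < τ ∧ r ≤ lam*τ ∧ μ/τ ≤ ε := by
    refine ⟨max (r/lam) (μ/ε), lt_max_of_lt_left (div_pos hr hl0), ?_, ?_⟩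
    · have h1 := le_max_left (r/lam) (μ/ε)
      rw [div_le_iff₀ hl0] at h1
      linarith
    · have h1 := le_max_right (r/lam) (μ/ε)
      rw [div_le_iff₀ hε] at h1
      rw [div_le_iff₀ (lt_max_of_lt_left (div_pos hr hl0))]
      nlinarith
  -- the coefficients of β
  obtain ⟨c₁, c₂, hc₁pos, hc₂pos, hcsum, hczero⟩ :
      ∃ c₁ c₂ : ℝ, 0 < c₁ ∧ 0 < c₂ ∧ c₁ + c₂ = 1 ∧ c₁*p + c₂*(1-p) = 0 := by
    have h2p : 0 < 2*p-1 := by linarith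
    exact ⟨(p-1)/(2*p-1), p/(2*p-1), div_pos (by linarith) h2p, div_pos (by linarith) h2p,
      by rw [← add_div, div_eq_one_iff_eq h2p.ne']; ring, by field_simp; ring⟩
  have hreg : ∀ t : ℝ, 0 ≤ t → -(τ/4) < t := fun t h => by linarith
  have hβpos : ∀ t : ℝ, 0 < WFβ τ r c₁ c₂ p t := by
    intro t
    have e1 := WFe_pos (τ := τ) (q := p) t
    have e2 := WFe_pos (τ := τ) (q := 1-p) t
    unfold WFβ
    nlinarith [mul_pos hc₁pos e1, mul_pos hc₂pos e2]
  -- the final time T where the derivative of β exceeds lam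
  obtain ⟨T, hT0, hfBT⟩ : ∃ T : ℝ, 0 ≤ T ∧ lam ≤ WFB τ r c₁ c₂ p T := by
    set X : ℝ := max 1 ((lam*τ/r + c₂*(p-1))/(c₁*p)) with hXdef
    have hX1 : 1 ≤ X := le_max_left _ _
    have hXpos : 0 < X := by linarith
    set M : ℝ := Real.log X / (p-1) with hMdef
    have hM0 : 0 ≤ M := div_nonneg (Real.log_nonneg hX1) (by linarith)
    have hexpM1 : 1 ≤ Real.exp M := Real.one_le_exp hM0
    refine ⟨τ * Real.exp M - τ, by nlinarith, ?_⟩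
    have hTreg : -(τ/4) < τ * Real.exp M - τ := by nlinarith
    have hτT : τ + (τ * Real.exp M - τ) = τ * Real.exp M := by ring
    have hlogT : Real.log (τ + (τ * Real.exp M - τ)) - Real.log τ = M := by
      rw [hτT, Real.log_mul hτpos.ne' (Real.exp_ne_zero M), Real.log_exp]
      ring
    have hWFeT : ∀ q : ℝ, WFe τ q (τ * Real.exp M - τ) = Real.exp (q*M) := by
      intro q
      unfold WFe
      rw [WFh_eq hτpos hTreg, hlogT]
    have hpne : p - 1 ≠ 0 := by linarith
    have hXe : X ≤ Real.exp ((p-1)*M) := by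
      rw [hMdef]
      rw [show (p-1)*(Real.log X/(p-1)) = Real.log X by field_simp]
      rw [Real.exp_log hXpos]
    have hXge : lam*τ/r + c₂*(p-1) ≤ c₁*p*X := by
      have h1 : (lam*τ/r + c₂*(p-1))/(c₁*p) ≤ X := le_max_right _ _
      rw [div_le_iff₀ (by positivity)] at h1
      nlinarith
    have hB1 : Real.exp ((1-p)*M) ≤ 1 := by
      apply Real.exp_le_one_iff.2
      nlinarith
    have hEadd : Real.exp ((p-1)*M) * Real.exp M = Real.exp (p*M) := by
      rw [← Real.exp_add]
      ring_nf
    have hkey : (lam*τ/r)*Real.exp M + c₂*(p-1) ≤ c₁*p*Real.exp (p*M) := by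
      have h2 : (lam*τ/r + c₂*(p-1))*Real.exp M ≤ (c₁*p*X)*Real.exp M :=
        mul_le_mul_of_nonneg_right hXge (by positivity)
      have h3 : c₁*p*X*Real.exp M ≤ c₁*p*Real.exp ((p-1)*M)*Real.exp M :=
        mul_le_mul_of_nonneg_right
          (mul_le_mul_of_nonneg_left hXe (mul_nonneg hc₁pos.le (by linarith : (0:ℝ) ≤ p))) (Real.exp_pos M).le
      have h4 : c₂*(p-1) ≤ c₂*(p-1)*Real.exp M := by
        have := mul_le_mul_of_nonneg_left hexpM1 (mul_nonneg hc₂pos.le (by linarith : (0:ℝ) ≤ p-1))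
        linarith
      have h5 : c₁*p*Real.exp ((p-1)*M)*Real.exp M = c₁*p*Real.exp (p*M) := by
        rw [mul_assoc, hEadd]
      nlinarith [h2, h3, h4, h5]
    have hgoal : lam * (τ*Real.exp M)
        ≤ r * (c₁*p*Real.exp (p*M) + c₂*(1-p)*Real.exp ((1-p)*M)) := by
      have h5 : r*(c₂*(p-1)) * Real.exp ((1-p)*M) ≤ r*(c₂*(p-1)) := by
        nlinarith [Real.exp_pos ((1-p)*M),
          mul_pos hr (mul_pos hc₂pos (by linarith : (0:ℝ) < p-1))]
      have h6 := mul_le_mul_of_nonneg_left hkey hr.le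
      have h7 : r*(lam*τ/r) = lam*τ := by field_simp
      nlinarith [h5, h6, h7]
    unfold WFB
    rw [hWFeT p, hWFeT (1-p), hτT, div_mul_eq_mul_div, le_div_iff₀ (by positivity)]
    nlinarith [hgoal]

  -- continuity and monotonicity of WFB on [0,T]
  have hBcont : ContinuousOn (WFB τ r c₁ c₂ p) (Icc 0 T) := by
    intro t ht
    exact ((WFB_hasDeriv hτpos (hreg t ht.1)).continuousAt).continuousWithinAt
  have hBmono : MonotoneOn (WFB τ r c₁ c₂ p) (Icc 0 T) := by
    apply monotoneOn_of_deriv_nonneg (convex_Icc 0 T) hBcont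
    · intro t ht
      rw [interior_Icc] at ht
      exact ((WFB_hasDeriv hτpos (hreg t ht.1.le)).differentiableAt).differentiableWithinAt
    · intro t ht
      rw [interior_Icc] at ht
      rw [(WFB_hasDeriv hτpos (hreg t ht.1.le)).deriv]
      have hx : (0:ℝ) < τ + t := by have := hreg t ht.1.le; linarith
      have hb1 := hβpos t
      have hx2 : (0:ℝ) < (τ+t)^2 := pow_pos hx 2
      positivity
  have hB0 : WFB τ r c₁ c₂ p 0 = 0 := by
    unfold WFB
    rw [WFe_zero hτpos, WFe_zero hτpos]
    rw [show c₁*p*1 + c₂*(1-p)*1 = 0 by linarith [hczero]]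
    ring
  -- the time t₀
  obtain ⟨t₀, ht₀mem, ht₀val⟩ : ∃ t₀ ∈ Icc 0 T, WFB τ r c₁ c₂ p t₀ = lam := by
    have h1 := intermediate_value_Icc hT0 hBcont
    have hmem : lam ∈ Icc (WFB τ r c₁ c₂ p 0) (WFB τ r c₁ c₂ p T) := by
      rw [hB0]
      exact ⟨hl0.le, hfBT⟩
    exact h1 hmem
  have ht₀pos : 0 < t₀ := by
    rcases lt_or_eq_of_le ht₀mem.1 with hlt|heq
    · exact hlt
    · exfalso
      rw [← heq, hB0] at ht₀val
      linarith
  have hvle : ∀ t ∈ Icc (0:ℝ) t₀, WFB τ r c₁ c₂ p t ≤ lam := by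
    intro t ht
    have h1 : t ∈ Icc (0:ℝ) T := ⟨ht.1, le_trans ht.2 ht₀mem.2⟩
    rw [← ht₀val]
    exact hBmono h1 ht₀mem ht.2
  have hv0 : ∀ t ∈ Icc (0:ℝ) t₀, 0 ≤ WFB τ r c₁ c₂ p t := by
    intro t ht
    have h1 : t ∈ Icc (0:ℝ) T := ⟨ht.1, le_trans ht.2 ht₀mem.2⟩
    rw [← hB0]
    exact hBmono ⟨le_refl 0, hT0⟩ h1 ht.1
  have hβ0 : WFβ τ r c₁ c₂ p 0 = r := by
    unfold WFβ
    rw [WFe_zero hτpos, WFe_zero hτpos, mul_one, mul_one, hcsum, mul_one]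
  -- β t ≤ lam * (τ + t) on [0, t₀]
  have hβle : ∀ t ∈ Icc (0:ℝ) t₀, WFβ τ r c₁ c₂ p t ≤ lam*(τ+t) := by
    intro t ht
    have hwmono : MonotoneOn (fun u => lam*(τ+u) - WFβ τ r c₁ c₂ p u) (Icc 0 t₀) := by
      have hder : ∀ u : ℝ, 0 ≤ u →
          HasDerivAt (fun u => lam*(τ+u) - WFβ τ r c₁ c₂ p u) (lam - WFB τ r c₁ c₂ p u) u := by
        intro u hu
        have h1 : HasDerivAt (fun u : ℝ => lam*(τ+u)) lam u := by
          simpa using ((hasDerivAt_id u).const_add τ).const_mul lam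
        exact h1.sub (WFβ_hasDeriv hτpos (hreg u hu))
      apply monotoneOn_of_deriv_nonneg (convex_Icc 0 t₀)
      · intro u hu
        exact ((hder u hu.1).continuousAt).continuousWithinAt
      · intro u hu
        rw [interior_Icc] at hu
        exact ((hder u hu.1.le).differentiableAt).differentiableWithinAt
      · intro u hu
        rw [interior_Icc] at hu
        rw [(hder u hu.1.le).deriv]
        have := hvle u ⟨hu.1.le, hu.2.le⟩
        linarith
    have h1 := hwmono (left_mem_Icc.2 ht₀pos.le) ht ht.1
    simp only [add_zero] at h1
    rw [hβ0] at h1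
    linarith
  -- assemble the result
  refine ⟨t₀, ht₀pos, WFβ τ r c₁ c₂ p, WFe τ μ, ?_, WFe_smooth hτpos,
    fun t _ => hβpos t, fun t _ => WFe_pos t, ?_, ?_, WFe_zero hτpos, hβ0, ?_, ?_, ?_, ?_⟩
  · -- smoothness of β
    unfold WFβ
    exact contDiff_const.mul ((contDiff_const.mul (WFe_smooth hτpos)).add
      (contDiff_const.mul (WFe_smooth hτpos)))
  · -- first inequality
    intro t ht
    have hregt := hreg t ht.1
    have hx : (0:ℝ) < τ + t := by linarith
    have hγt : 0 < WFe τ μ t := WFe_pos t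
    have hβt := hβpos t
    rw [WFe_deriv2 hτpos hregt, WFβ_deriv2 hτpos hregt]
    have heq : ∀ x G B : ℝ, x ≠ 0 → G ≠ 0 → B ≠ 0 →
        -a * (μ*(μ-1)/x^2 * G) / G - b * (p*(p-1)/x^2 * B) / B
          = (a*μ*(1-μ) - b*(p*(p-1)))/x^2 := by
      intro x G B hx0 hG hB
      field_simp
      ring
    rw [heq (τ+t) (WFe τ μ t) (WFβ τ r c₁ c₂ p t) hx.ne' hγt.ne' hβt.ne', hbQ]
    have h1 : a*μ*(1-μ) - a*μ*(1-μ)/2 = a*μ*(1-μ)/2 := by ring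
    rw [h1]
    have h2 : (0:ℝ) < a*μ*(1-μ) := mul_pos (mul_pos ha hμpos) hμ1
    have h3 : (0:ℝ) < (τ+t)^2 := pow_pos hx 2
    apply div_pos (by linarith) h3
  · -- second inequality
    intro t ht
    have hregt := hreg t ht.1
    have hx : (0:ℝ) < τ + t := by linarith
    have hγt : 0 < WFe τ μ t := WFe_pos t
    have hβt := hβpos t
    have hB := hβle t ht
    have hv1 := hvle t ht
    have hv2 := hv0 t ht
    rw [WFβ_deriv2 hτpos hregt, WFβ_deriv hτpos hregt, WFe_deriv hτpos hregt]
    obtain ⟨x, hxeq, hx0⟩ : ∃ x : ℝ, τ + t = x ∧ 0 < x := ⟨τ+t, rfl, hx⟩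
    rw [hxeq] at hB ⊢
    obtain ⟨v, hveq⟩ : ∃ v : ℝ, WFB τ r c₁ c₂ p t = v := ⟨_, rfl⟩
    rw [hveq] at hv1 hv2 ⊢
    obtain ⟨B, hBeq⟩ : ∃ B : ℝ, WFβ τ r c₁ c₂ p t = B := ⟨_, rfl⟩
    rw [hBeq] at hB hβt ⊢
    obtain ⟨G, hGeq⟩ : ∃ G : ℝ, WFe τ μ t = G := ⟨_, rfl⟩
    rw [hGeq] at hγt ⊢
    have hx2 : (0:ℝ) < x^2 := pow_pos hx0 2
    have key : 0 < (b-1)*(1-v^2)*x^2 - a*μ*v*(x*B) - p*(p-1)*B^2 := by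
      have f1 : v^2 ≤ lam^2 := by nlinarith
      have f2 : (b-1)*x^2*(v^2) ≤ (b-1)*x^2*(lam^2) :=
        mul_le_mul_of_nonneg_left f1 (mul_nonneg hk.le hx2.le)
      have f3a : v*B ≤ lam*(lam*x) := mul_le_mul hv1 hB hβt.le hl0.le
      have f3 := mul_le_mul_of_nonneg_left f3a
        (mul_nonneg (mul_nonneg ha.le hμpos.le) hx0.le)
      have f4 : p*(p-1)*B^2 ≤ p*(p-1)*(lam*x)^2 :=
        mul_le_mul_of_nonneg_left (pow_le_pow_left₀ hβt.le hB 2) hppos.le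
      have f5 : a*μ*lam^2*x^2 ≤ ((b-1)*(1-lam^2)/2)*x^2 :=
        mul_le_mul_of_nonneg_right hA1 (sq_nonneg _)
      have f6 : p*(p-1)*lam^2*x^2 ≤ ((b-1)*(1-lam^2)/4)*x^2 :=
        mul_le_mul_of_nonneg_right hA2 (sq_nonneg _)
      have f7 : 0 < (b-1)*(1-lam^2)*x^2 := mul_pos (mul_pos hk hl2) hx2
      linarith [f2, f3, f4, f5, f6, f7]
    have heq : -(p*(p-1)/x^2 * B) / B + (b-1)*(1-v^2)/B^2 - a*((μ/x*G)*v)/(G*B)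
        = ((b-1)*(1-v^2)*x^2 - a*μ*v*(x*B) - p*(p-1)*B^2) / (x^2*B^2) := by
      field_simp
      ring
    rw [heq]
    exact div_pos key (mul_pos hx2 (pow_pos hβt 2))
  · -- deriv γ 0 ≤ ε
    rw [WFe_deriv hτpos (hreg 0 le_rfl), WFe_zero hτpos]
    simpa using hτε
  · -- deriv β 0 = 0
    rw [WFβ_deriv hτpos (hreg 0 le_rfl)]
    exact hB0
  · -- 0 ≤ deriv γ t₀
    rw [WFe_deriv hτpos (hreg t₀ ht₀pos.le)]
    have hx : (0:ℝ) < τ + t₀ := by linarith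
    have := WFe_pos (τ := τ) (q := μ) t₀
    positivity
  · -- lam ≤ deriv β t₀
    rw [WFβ_deriv hτpos (hreg t₀ ht₀pos.le), ht₀val]
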